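/- Under the same assumptions, for l ≠ k the between-task influence satisfies ∂θ̂_k/∂σ_{li} = -H_{kk}^{-1} H_{k,K+1} · ∂γ̂/∂σ_{li}; in particular, if the cross block H_{k,K+1} = 0, then data from task l has zero first-order influence on task k's parameters. -/
import Mathlib


open Matrix

/-- The arrowhead block Hessian of the multitask objective at the minimizer. -/
def arrowheadMatrix {K p : ℕ} {d : Fin K → ℕ}
    (Hd : ∀ k, Matrix (Fin (d k)) (Fin (d k)) ℝ)
    (Hr : ∀ k, Matrix (Fin (d k)) (Fin p) ℝ)
    (Hc : ∀ k, Matrix (Fin p) (Fin (d k)) ℝ)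
    (Hcorner : Matrix (Fin p) (Fin p) ℝ) :
    Matrix ((Σ k, Fin (d k)) ⊕ Fin p) ((Σ k, Fin (d k)) ⊕ Fin p) ℝ :=
  Matrix.fromBlocks (Matrix.blockDiagonal' Hd)
    (Matrix.of fun x j => Hr x.1 x.2 j)
    (Matrix.of fun j x => Hc x.1 j x.2)
    Hcorner

/-- Between-task influence (Proposition 3.1, Eq. (8)). With `v = ∂ŵ/∂σ_{li}` the
derivative of the minimizer of the σ-weighted multitask objective in the weight
`σ_{li}` of the `i`-th point of task `l ≠ k`, solving (by the implicit function
theorem) `H v = -g` where `g` has the gradients of `ℓ_{li}` in block `l` and the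
shared block (and zero in block `k`, since `ℓ_{li}` does not depend on `θ_k`),
the task-`k` block of `v` satisfies
`∂θ̂_k/∂σ_{li} = -H_{kk}⁻¹ H_{k,K+1} ∂γ̂/∂σ_{li}`; in particular, if the cross
block `H_{k,K+1} = 0`, then data from task `l` has zero first-order influence on
task `k`'s parameters. -/
lemma bd_mulVec_apply {K : ℕ} {d : Fin K → ℕ} (Hd : ∀ k, Matrix (Fin (d k)) (Fin (d k)) ℝ)
    (u : (Σ j, Fin (d j)) → ℝ) (k : Fin K) (i : Fin (d k)) :
    (Matrix.blockDiagonal' Hd *ᵥ u) ⟨k, i⟩ = (Hd k *ᵥ fun x => u ⟨k, x⟩) i := by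
  simp only [mulVec, dotProduct]
  rw [← Finset.univ_sigma_univ, Finset.sum_sigma, Fintype.sum_eq_single k]
  · simp [blockDiagonal'_apply]
  · intro j hj
    simp [blockDiagonal'_apply, Ne.symm hj]

theorem stmt_11 {K p : ℕ} {d : Fin K → ℕ}
    (Hd : ∀ k, Matrix (Fin (d k)) (Fin (d k)) ℝ)
    (Hr : ∀ k, Matrix (Fin (d k)) (Fin p) ℝ)
    (Hc : ∀ k, Matrix (Fin p) (Fin (d k)) ℝ)
    (Hcorner : Matrix (Fin p) (Fin p) ℝ)
    (hd : ∀ k, IsUnit (Hd k))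
    (N : Matrix (Fin p) (Fin p) ℝ)
    (hNdef : N = Hcorner - ∑ j, Hc j * (Hd j)⁻¹ * Hr j)
    (hN : IsUnit N)
    (k l : Fin K) (hkl : l ≠ k)
    -- gradients ∂ℓ_{li}/∂θ_l and ∂ℓ_{li}/∂γ of the loss of the (l,i)-th point at ŵ
    (gθ : Fin (d l) → ℝ) (gγ : Fin p → ℝ)
    -- ŵ as a function of the weight σ_{li}, with derivative v at σ_{li} = 1
    (what : ℝ → (((Σ j, Fin (d j)) ⊕ Fin p) → ℝ))
    (v : ((Σ j, Fin (d j)) ⊕ Fin p) → ℝ)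
    (hderiv : HasDerivAt what v 1)
    -- differentiated stationarity condition (implicit function theorem): H v = -g
    (hv : (arrowheadMatrix Hd Hr Hc Hcorner) *ᵥ v =
      -(Sum.elim
          (fun x : Σ j, Fin (d j) =>
            if h : x.1 = l then gθ (Fin.cast (congrArg d h) x.2) else 0)
          gγ)) :
    (fun i => v (Sum.inl ⟨k, i⟩)) =
        -(((Hd k)⁻¹ * Hr k) *ᵥ (fun j => v (Sum.inr j))) ∧
      (Hr k = 0 → (fun i => v (Sum.inl ⟨k, i⟩)) = 0) := by
  have hvelim : v = Sum.elim (fun x => v (Sum.inl x)) (fun y => v (Sum.inr y)) :=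
    funext fun x => by cases x <;> rfl
  have hv' := hv
  rw [hvelim, arrowheadMatrix, fromBlocks_mulVec] at hv'
  have key : Hd k *ᵥ (fun i => v (Sum.inl ⟨k, i⟩)) = -(Hr k *ᵥ (fun j => v (Sum.inr j))) := by
    funext i
    have h := congrFun hv' (Sum.inl ⟨k, i⟩)
    simp only [Sum.elim_inl, Pi.add_apply, Pi.neg_apply, dif_neg (Ne.symm hkl), neg_zero, Sum.elim_comp_inl, Sum.elim_comp_inr] at h
    have hb := bd_mulVec_apply Hd (fun x => v (Sum.inl x)) k i
    have hB : ((Matrix.of fun (x : Σ j, Fin (d j)) j => Hr x.1 x.2 j) *ᵥ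
        (fun y => v (Sum.inr y))) (⟨k, i⟩ : Σ j, Fin (d j)) =
        (Hr k *ᵥ (fun j => v (Sum.inr j))) i := rfl
    rw [hb, hB] at h
    simp only [Pi.neg_apply]
    linarith
  have hkey2 : (fun i => v (Sum.inl ⟨k, i⟩)) = -(((Hd k)⁻¹ * Hr k) *ᵥ (fun j => v (Sum.inr j))) := by
    have := congrArg (fun w => (Hd k)⁻¹ *ᵥ w) key
    simpa [mulVec_mulVec, Matrix.nonsing_inv_mul _ ((Matrix.isUnit_iff_isUnit_det _).mp (hd k)),
      mulVec_neg, Matrix.mul_assoc] using this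
  refine ⟨hkey2, fun hr0 => ?_⟩
  rw [hkey2, hr0]
  simp
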